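/- The set {ε₀} ∪ {ε_j : j ∈ 𝒫'} is a complete set of orthogonal primitive idempotents of K¹𝒫: each of these matrices is a nonzero idempotent element of K¹𝒫, they are pairwise orthogonal, their sum is Id_n, and none of them can be written as a sum of two nonzero orthogonal idempotents of K¹𝒫. -/

import Mathlib

open Matrix

/-- A finite poset structure on `{1,…,n}` (modeled as `Fin n`) whose order
relation refines the natural linear order. -/
structure PosetOn (n : ℕ) where
  le : Fin n → Fin n → Prop
  le_refl : ∀ i, le i i
  le_trans : ∀ {i j k : Fin n}, le i j → le j k → le i k
  le_compat : ∀ {i j : Fin n}, le i j → i ≤ j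

/-- `i` is a minimal element of `𝒫`. -/
def PosetOn.IsMin {n : ℕ} (P : PosetOn n) (i : Fin n) : Prop := ∀ j, P.le j i → j = i

/-- A minimal marking of `𝒫`: a function `m : 𝒫 → min(𝒫)` with `m j ⪯ j`. -/
structure MinimalMarking {n : ℕ} (P : PosetOn n) where
  m : Fin n → Fin n
  isMin : ∀ j, P.IsMin (m j)
  le : ∀ j, P.le (m j) j

/-- The incidence algebra `K𝒫` as a set of `n × n` matrices. -/
def KPset (K : Type) [Field K] {n : ℕ} (P : PosetOn n) : Set (Matrix (Fin n) (Fin n) K) :=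
  {M | ∀ j i, M j i ≠ 0 → P.le i j}

/-- The row-balanced incidence algebra `K¹𝒫`. -/
def KPoneSet (K : Type) [Field K] {n : ℕ} (P : PosetOn n) : Set (Matrix (Fin n) (Fin n) K) :=
  {M | M ∈ KPset K P ∧ ∃ c : K, M *ᵥ (fun _ => 1) = fun _ => c}

/-- `ε_j := E_{jj} − E_{j m(j)}`. -/
def epsMat (K : Type) [Field K] {n : ℕ} (P : PosetOn n) (mk : MinimalMarking P) (j : Fin n) :
    Matrix (Fin n) (Fin n) K :=
  single j j 1 - single j (mk.m j) 1

/-- `ε₀ := Id_n − Σ_{j ∈ 𝒫'} ε_j`. -/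
noncomputable def eps0Mat (K : Type) [Field K] {n : ℕ} (P : PosetOn n) (mk : MinimalMarking P) :
    Matrix (Fin n) (Fin n) K :=
  letI := Classical.decPred fun j : Fin n => P.IsMin j
  1 - ∑ j ∈ Finset.univ.filter (fun j : Fin n => ¬ P.IsMin j), epsMat K P mk j

/-- The set `{ε₀} ∪ {ε_j : j ∈ 𝒫'}`. -/
def idemSet (K : Type) [Field K] {n : ℕ} (P : PosetOn n) (mk : MinimalMarking P) :
    Set (Matrix (Fin n) (Fin n) K) :=
  insert (eps0Mat K P mk) {M | ∃ j, ¬ P.IsMin j ∧ M = epsMat K P mk j}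

section Helpers
variable {K : Type} [Field K] {n : ℕ} {P : PosetOn n} {mk : MinimalMarking P}

lemma m_eq_self {i : Fin n} (h : P.IsMin i) : mk.m i = i := h (mk.m i) (mk.le i)

lemma m_ne_self {j : Fin n} (h : ¬ P.IsMin j) : mk.m j ≠ j := by
  intro he; exact h (he ▸ mk.isMin j)

lemma eps_apply (j i k : Fin n) :
    epsMat K P mk j i k =
      if i = j then ((if k = j then 1 else 0) - (if k = mk.m j then (1:K) else 0)) else 0 := by
  simp only [epsMat, Matrix.sub_apply, Matrix.single, Matrix.of_apply]
  by_cases h : i = j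
  · simp [h, eq_comm]
  · have h' : j ≠ i := fun e => h e.symm
    simp [h, h']

lemma eps0_apply (i k : Fin n) :
    eps0Mat K P mk i k = if k = mk.m i then (1:K) else 0 := by
  classical
  simp only [eps0Mat, Matrix.sub_apply, Matrix.sum_apply, Matrix.one_apply, eps_apply]
  rw [Finset.sum_ite_eq (Finset.univ.filter fun j : Fin n => ¬ P.IsMin j) i]
  by_cases hi : P.IsMin i
  · have : mk.m i = i := m_eq_self hi
    simp [hi, this, eq_comm]
  · have hne := m_ne_self (mk := mk) hi
    by_cases hk : k = i <;> by_cases hk2 : k = mk.m i <;> simp_all [eq_comm]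
lemma eps0_mul_apply (A : Matrix (Fin n) (Fin n) K) (i k : Fin n) :
    (eps0Mat K P mk * A) i k = A (mk.m i) k := by
  rw [Matrix.mul_apply]
  simp only [eps0_apply, ite_mul, one_mul, zero_mul]
  rw [Finset.sum_ite_eq' Finset.univ (mk.m i)]
  simp

lemma eps_mul_apply (A : Matrix (Fin n) (Fin n) K) (j i k : Fin n) :
    (epsMat K P mk j * A) i k = if i = j then A j k - A (mk.m j) k else 0 := by
  rw [Matrix.mul_apply]
  simp only [eps_apply]
  by_cases h : i = j
  · simp only [h, if_pos rfl, sub_mul, ite_mul, one_mul, zero_mul, if_true]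
    rw [Finset.sum_sub_distrib, Finset.sum_ite_eq' Finset.univ j,
      Finset.sum_ite_eq' Finset.univ (mk.m j)]
    simp
  · simp [h]

lemma mul_eps_apply (A : Matrix (Fin n) (Fin n) K) (j i k : Fin n) :
    (A * epsMat K P mk j) i k
      = A i j * ((if k = j then 1 else 0) - (if k = mk.m j then (1:K) else 0)) := by
  rw [Matrix.mul_apply]
  simp only [eps_apply, mul_ite, mul_zero]
  rw [Finset.sum_ite_eq' Finset.univ j]
  simp

lemma row_min {M : Matrix (Fin n) (Fin n) K} (hM : M ∈ KPset K P) {p : Fin n}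
    (hp : P.IsMin p) (k : Fin n) : M p k = if k = p then M p p else 0 := by
  by_cases h : k = p
  · simp [h]
  · simp only [h, if_neg h]
    by_contra h0
    exact h (hp k (hM p k h0))

lemma row_min_const {M : Matrix (Fin n) (Fin n) K} (hM : M ∈ KPset K P) {c : K}
    (hc : M *ᵥ (fun _ => 1) = fun _ => c) {p : Fin n} (hp : P.IsMin p) : M p p = c := by
  have := congrFun hc p
  simp only [Matrix.mulVec, dotProduct, mul_one] at this
  rw [← this]
  rw [Finset.sum_eq_single p]
  · intro b _ hb; rw [row_min hM hp b, if_neg hb]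
  · simp

lemma eps0_mul {M : Matrix (Fin n) (Fin n) K} (hM : M ∈ KPset K P) {c : K}
    (hc : M *ᵥ (fun _ => 1) = fun _ => c) :
    eps0Mat K P mk * M = c • eps0Mat K P mk := by
  ext i k
  rw [eps0_mul_apply, Matrix.smul_apply, eps0_apply, smul_eq_mul,
    row_min hM (mk.isMin i) k, row_min_const hM hc (mk.isMin i)]
  by_cases h : k = mk.m i <;> simp [h]

lemma M_mj_j_zero {M : Matrix (Fin n) (Fin n) K} (hM : M ∈ KPset K P) {j : Fin n}
    (hj : ¬ P.IsMin j) : M (mk.m j) j = 0 := by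
  by_contra h0
  exact m_ne_self (mk := mk) hj ((mk.isMin j) j (hM (mk.m j) j h0)).symm

lemma corner {M : Matrix (Fin n) (Fin n) K} (hM : M ∈ KPset K P) {j : Fin n}
    (hj : ¬ P.IsMin j) :
    epsMat K P mk j * M * epsMat K P mk j = M j j • epsMat K P mk j := by
  ext i k
  rw [mul_eps_apply, eps_mul_apply, Matrix.smul_apply, eps_apply, smul_eq_mul,
    M_mj_j_zero hM hj, sub_zero]
  by_cases h : i = j <;> simp [h]

lemma eps0_mem_KP : eps0Mat K P mk ∈ KPset K P := by
  intro i k h0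
  rw [eps0_apply] at h0
  by_cases h : k = mk.m i
  · exact h ▸ mk.le i
  · simp [h] at h0

lemma eps0_mulVec : eps0Mat K P mk *ᵥ (fun _ => 1) = fun _ => (1:K) := by
  funext i
  simp only [Matrix.mulVec, dotProduct, eps0_apply, mul_one, ite_mul]
  rw [Finset.sum_ite_eq' Finset.univ (mk.m i)]
  simp

lemma eps0_mem : eps0Mat K P mk ∈ KPoneSet K P := ⟨eps0_mem_KP, 1, eps0_mulVec⟩

lemma eps_mem (j : Fin n) : epsMat K P mk j ∈ KPoneSet K P := by
  refine ⟨fun i k h0 => ?_, 0, ?_⟩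
  · rw [eps_apply] at h0
    by_cases h : i = j
    · by_cases hk : k = j
      · rw [hk, h]; exact P.le_refl j
      · by_cases hk2 : k = mk.m j
        · rw [hk2, h]; exact mk.le j
        · simp [h, hk, hk2] at h0
    · simp [h] at h0
  · funext i
    simp only [Matrix.mulVec, dotProduct, eps_apply, mul_one]
    by_cases h : i = j
    · simp only [h, if_true, if_pos rfl]
      rw [Finset.sum_sub_distrib, Finset.sum_ite_eq' Finset.univ j,
        Finset.sum_ite_eq' Finset.univ (mk.m j)]
      simp
    · simp [h]

lemma eps_ne_zero {j : Fin n} (hj : ¬ P.IsMin j) : epsMat K P mk j ≠ 0 := by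
  intro h
  have := congrFun (congrFun h j) j
  rw [eps_apply] at this
  simp [Ne.symm (m_ne_self (mk := mk) hj)] at this

lemma eps0_ne_zero (hn : 1 ≤ n) : eps0Mat K P mk ≠ (0 : Matrix (Fin n) (Fin n) K) := by
  intro h
  have := congrFun (congrFun h ⟨0, hn⟩) (mk.m ⟨0, hn⟩)
  rw [eps0_apply] at this
  simp at this

lemma one_mem_KP : (1 : Matrix (Fin n) (Fin n) K) ∈ KPset K P := by
  intro j i h0
  rw [Matrix.one_apply] at h0
  by_cases h : j = i
  · exact h ▸ P.le_refl j
  · simp [h] at h0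

lemma eps_idem {j : Fin n} (hj : ¬ P.IsMin j) :
    epsMat K P mk j * epsMat K P mk j = epsMat K P mk j := by
  have h := corner (mk := mk) (one_mem_KP (K := K) (P := P)) hj
  rw [mul_one, Matrix.one_apply_eq] at h
  rw [h, one_smul]

lemma eps0_idem : eps0Mat K P mk * eps0Mat K P mk = eps0Mat K P mk := by
  rw [eps0_mul eps0_mem_KP eps0_mulVec, one_smul]

lemma eps0_mul_eps {j : Fin n} (hj : ¬ P.IsMin j) :
    eps0Mat K P mk * epsMat K P mk j = 0 := by
  ext i k
  rw [eps0_mul_apply, eps_apply]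
  have : mk.m i ≠ j := fun h => hj (h ▸ mk.isMin i)
  simp [this]

lemma eps_mul_eps0 {j : Fin n} (_hj : ¬ P.IsMin j) :
    epsMat K P mk j * eps0Mat K P mk = 0 := by
  ext i k
  rw [eps_mul_apply, eps0_apply, eps0_apply, m_eq_self (mk := mk) (mk.isMin j)]
  simp

lemma eps_mul_eps {j j' : Fin n} (hj' : ¬ P.IsMin j') (hne : j ≠ j') :
    epsMat K P mk j * epsMat K P mk j' = 0 := by
  ext i k
  rw [eps_mul_apply, eps_apply, eps_apply]
  have h1 : mk.m j ≠ j' := fun h => hj' (h ▸ mk.isMin j)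
  simp [hne, h1]

lemma not_decomp_eps {j : Fin n} (hj : ¬ P.IsMin j) (f g : Matrix (Fin n) (Fin n) K)
    (hf : f ∈ KPoneSet K P) (hg : g ∈ KPoneSet K P) (hf0 : f ≠ 0) (hg0 : g ≠ 0)
    (hff : f * f = f) (hgg : g * g = g) (hfg : f * g = 0) (hgf : g * f = 0) :
    epsMat K P mk j ≠ f + g := by
  intro he
  have hfe : f * epsMat K P mk j = f := by rw [he, mul_add, hff, hfg, add_zero]
  have hef : epsMat K P mk j * f = f := by rw [he, add_mul, hff, hgf, add_zero]
  have hge : g * epsMat K P mk j = g := by rw [he, mul_add, hgg, hgf, zero_add]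
  have heg : epsMat K P mk j * g = g := by rw [he, add_mul, hgg, hfg, zero_add]
  have h1 : f = f j j • epsMat K P mk j := by
    have hc := corner (mk := mk) hf.1 hj
    rw [hef, hfe] at hc
    exact hc
  have h2 : g = g j j • epsMat K P mk j := by
    have hc := corner (mk := mk) hg.1 hj
    rw [heg, hge] at hc
    exact hc
  have h0 : (f j j • epsMat K P mk j) * (g j j • epsMat K P mk j) = 0 := by
    rw [← h1, ← h2]; exact hfg
  rw [smul_mul_assoc, mul_smul_comm, eps_idem hj, smul_smul] at h0
  rcases smul_eq_zero.mp h0 with h | h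
  · rcases mul_eq_zero.mp h with h' | h'
    · exact hf0 (by rw [h1, h', zero_smul])
    · exact hg0 (by rw [h2, h', zero_smul])
  · exact eps_ne_zero (mk := mk) hj h

lemma not_decomp_eps0 (hn : 1 ≤ n) (f g : Matrix (Fin n) (Fin n) K)
    (hf : f ∈ KPoneSet K P) (hg : g ∈ KPoneSet K P) (hf0 : f ≠ 0) (hg0 : g ≠ 0)
    (hff : f * f = f) (hgg : g * g = g) (hfg : f * g = 0) (hgf : g * f = 0) :
    eps0Mat K P mk ≠ f + g := by
  intro he
  have hef : eps0Mat K P mk * f = f := by rw [he, add_mul, hff, hgf, add_zero]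
  have heg : eps0Mat K P mk * g = g := by rw [he, add_mul, hgg, hfg, zero_add]
  obtain ⟨hfKP, c, hc⟩ := hf
  obtain ⟨hgKP, d, hd⟩ := hg
  have h1 : f = c • eps0Mat K P mk := by rw [← hef, eps0_mul hfKP hc]
  have h2 : g = d • eps0Mat K P mk := by rw [← heg, eps0_mul hgKP hd]
  have h0 : (c • eps0Mat K P mk) * (d • eps0Mat K P mk) = 0 := by
    rw [← h1, ← h2]; exact hfg
  rw [smul_mul_assoc, mul_smul_comm, eps0_idem, smul_smul] at h0
  rcases smul_eq_zero.mp h0 with h | h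
  · rcases mul_eq_zero.mp h with h' | h'
    · exact hf0 (by rw [h1, h', zero_smul])
    · exact hg0 (by rw [h2, h', zero_smul])
  · exact eps0_ne_zero (mk := mk) hn h

lemma eps_ne_eps0 {j : Fin n} (hj : ¬ P.IsMin j) :
    epsMat K P mk j ≠ eps0Mat K P mk := by
  intro h
  have := congrFun (congrFun h j) j
  rw [eps_apply, eps0_apply] at this
  have h1 : j ≠ mk.m j := Ne.symm (m_ne_self (mk := mk) hj)
  simp [h1] at this

lemma eps_inj {j j' : Fin n} (hj : ¬ P.IsMin j)
    (h : epsMat K P mk j = epsMat K P mk j') : j = j' := by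
  by_contra hne
  have := congrFun (congrFun h j) j
  rw [eps_apply, eps_apply] at this
  have h1 : j ≠ mk.m j := Ne.symm (m_ne_self (mk := mk) hj)
  simp [h1, hne] at this

end Helpers

/-- `{ε₀} ∪ {ε_j : j ∈ 𝒫'}` is a complete set of orthogonal primitive idempotents of `K¹𝒫`. -/
theorem stmt2 (K : Type) [Field K] (n : ℕ) (hn : 1 ≤ n) (P : PosetOn n)
    (mk : MinimalMarking P) :
    letI := Classical.decPred fun j : Fin n => P.IsMin j
    -- each element is a nonzero idempotent of `K¹𝒫`
    (∀ e ∈ idemSet K P mk, e ∈ KPoneSet K P ∧ e ≠ 0 ∧ e * e = e) ∧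
    -- the elements are pairwise distinct
    (∀ j, ¬ P.IsMin j → epsMat K P mk j ≠ eps0Mat K P mk) ∧
    (∀ j j', ¬ P.IsMin j → ¬ P.IsMin j' → epsMat K P mk j = epsMat K P mk j' → j = j') ∧
    -- pairwise orthogonality
    (∀ j, ¬ P.IsMin j → eps0Mat K P mk * epsMat K P mk j = 0 ∧
      epsMat K P mk j * eps0Mat K P mk = 0) ∧
    (∀ j j', ¬ P.IsMin j → ¬ P.IsMin j' → j ≠ j' →
      epsMat K P mk j * epsMat K P mk j' = 0) ∧
    -- the sum is the identity matrix
    (eps0Mat K P mk + ∑ j ∈ Finset.univ.filter (fun j : Fin n => ¬ P.IsMin j), epsMat K P mk j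
      = (1 : Matrix (Fin n) (Fin n) K)) ∧
    -- primitivity: no element is a sum of two nonzero orthogonal idempotents of `K¹𝒫`
    (∀ e ∈ idemSet K P mk, ¬ ∃ f g : Matrix (Fin n) (Fin n) K,
      f ∈ KPoneSet K P ∧ g ∈ KPoneSet K P ∧ f ≠ 0 ∧ g ≠ 0 ∧
      f * f = f ∧ g * g = g ∧ f * g = 0 ∧ g * f = 0 ∧ e = f + g) := by
  classical
  refine ⟨?_, ?_, ?_, ?_, ?_, ?_, ?_⟩
  · rintro e he
    rcases he with rfl | ⟨j, hj, rfl⟩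
    · exact ⟨eps0_mem, eps0_ne_zero hn, eps0_idem⟩
    · exact ⟨eps_mem j, eps_ne_zero hj, eps_idem hj⟩
  · exact fun j hj => eps_ne_eps0 hj
  · exact fun j j' hj _ h => eps_inj hj h
  · exact fun j hj => ⟨eps0_mul_eps hj, eps_mul_eps0 hj⟩
  · exact fun j j' _ hj' hne => eps_mul_eps hj' hne
  · simp only [eps0Mat]
    exact sub_add_cancel _ _
  · rintro e he ⟨f, g, hf, hg, hf0, hg0, hff, hgg, hfg, hgf, he2⟩
    rcases he with rfl | ⟨j, hj, rfl⟩
    · exact not_decomp_eps0 hn f g hf hg hf0 hg0 hff hgg hfg hgf he2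
    · exact not_decomp_eps hj f g hf hg hf0 hg0 hff hgg hfg hgf he2
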